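/- arXiv:2301.13452 — 4 statements merged into one kernel-verified Lean document; each statement's English description precedes it below -/
import Mathlib

section
/- For a permutation σ ∈ S_n written as σ = (n-1, i_{n-1}) ⋯ (2, i_2)(1, i_1) with k ≤ i_k ≤ n for each k, the number of indices k in {1, …, n} with i_k = k (using the convention i_n = n) equals the number of cycles in the disjoint cycle decomposition of σ (counting fixed points as 1-cycles). -/
/-- The permutation `(n-1, i_{n-1}) ⋯ (1, i_1)(0, i_0)` (0-indexed), where the
transposition with index `0` is applied first. -/
def pivotProd (n : ℕ) (i : Fin n → Fin n) : Equiv.Perm (Fin n) :=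
  ((List.ofFn fun k : Fin n => Equiv.swap k (i k)).reverse).prod

section aux

open Equiv Equiv.Perm Finset

variable {α : Type*} [DecidableEq α] [Fintype α]


lemma support_cycle_mul_swap {c : Perm α} {a b : α} (ha : c a = a) (hb : c b ≠ b) :
    (c * Equiv.swap a b).support = insert a c.support := by
  have hab : a ≠ b := by rintro rfl; exact hb ha
  ext x
  rcases eq_or_ne x a with rfl | hxa
  · simp only [Finset.mem_insert, true_or, iff_true, mem_support, mul_apply,
      Equiv.swap_apply_left]
    intro hcb
    exact hab (c.injective (hcb.trans ha.symm)).symm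
  rcases eq_or_ne x b with rfl | hxb
  · simp only [mem_support, mul_apply, Equiv.swap_apply_right, ha, Finset.mem_insert]
    constructor
    · intro _; exact Or.inr (mem_support.mp (by simpa using hb))
    · intro _; exact fun hax => hab hax
  · simp only [mem_support, mul_apply, Equiv.swap_apply_of_ne_of_ne hxa hxb,
      Finset.mem_insert, hxa, false_or]

lemma isCycle_cycle_mul_swap {c : Perm α} (hc : c.IsCycle) {a b : α} (ha : c a = a)
    (hb : c b ≠ b) : IsCycle (c * Equiv.swap a b) := by
  have hab : a ≠ b := by rintro rfl; exact hb ha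
  set d := c * Equiv.swap a b with hd
  have hdb : d b = a := by simp [hd, mul_apply, Equiv.swap_apply_right, ha]
  have hda : d a = c b := by simp [hd, mul_apply, Equiv.swap_apply_left]
  have hdx : ∀ x, x ≠ a → x ≠ b → d x = c x := fun x h1 h2 => by
    simp [hd, mul_apply, Equiv.swap_apply_of_ne_of_ne h1 h2]
  have hanotc : a ∉ c.support := by simp [mem_support, ha]
  have key : ∀ k : ℕ, d.SameCycle b ((c ^ k) b) := by
    intro k
    induction k with
    | zero => exact ⟨0, rfl⟩
    | succ k ih =>
      rcases eq_or_ne ((c ^ k) b) b with hkb | hkb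
      · rw [pow_succ', mul_apply, hkb]
        refine ⟨2, ?_⟩
        show d (d b) = c b
        rw [hdb, hda]
      · have hmem : (c ^ k) b ∈ c.support := by
          rw [Equiv.Perm.pow_apply_mem_support]
          exact mem_support.mpr hb
        have hxa : (c ^ k) b ≠ a := fun h => hanotc (h ▸ hmem)
        rw [pow_succ', mul_apply, ← hdx _ hxa hkb]
        exact (Equiv.Perm.sameCycle_apply_right).mpr ih
  refine ⟨b, by rw [hdb]; exact hab, fun y hy => ?_⟩
  have hy' : y ∈ d.support := mem_support.mpr hy
  rw [hd, support_cycle_mul_swap ha hb, Finset.mem_insert] at hy'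
  rcases hy' with rfl | hy'
  · exact ⟨1, by simpa using hdb⟩
  · obtain ⟨k, hk⟩ := hc.exists_pow_eq hb (mem_support.mp hy')
    rw [← hk]
    exact key k

lemma fix_add_support (σ : Perm α) :
    (univ.filter fun x => σ x = x).card + σ.support.card = Fintype.card α := by
  rw [Equiv.Perm.support]
  simpa using Finset.card_filter_add_card_filter_not
    (s := (univ : Finset α)) (p := fun x => σ x = x)

lemma merge_count (σ : Perm α) (a b : α) (ha : σ a = a) (hab : a ≠ b) :
    Multiset.card (σ * Equiv.swap a b).cycleType
        + (univ.filter fun x => (σ * Equiv.swap a b) x = x).card + 1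
      = Multiset.card σ.cycleType + (univ.filter fun x => σ x = x).card := by
  have f1 := fix_add_support σ
  have f2 := fix_add_support (σ * Equiv.swap a b)
  have hasupp : a ∉ σ.support := by simp [mem_support, ha]
  by_cases hb : σ b = b
  · -- disjoint case
    have hbsupp : b ∉ σ.support := by simp [mem_support, hb]
    have hdisj : Disjoint σ (Equiv.swap a b) := by
      intro x
      rcases eq_or_ne x a with rfl | hxa
      · exact Or.inl ha
      rcases eq_or_ne x b with rfl | hxb
      · exact Or.inl hb
      · exact Or.inr (Equiv.swap_apply_of_ne_of_ne hxa hxb)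
    have hct : Multiset.card (σ * Equiv.swap a b).cycleType
        = Multiset.card σ.cycleType + 1 := by
      rw [hdisj.cycleType_mul, (isCycle_swap hab).cycleType, card_support_swap hab]
      simp
    have hsup : (σ * Equiv.swap a b).support.card = σ.support.card + 2 := by
      have hdisjfin : _root_.Disjoint σ.support ({a, b} : Finset α) := by
        rw [Finset.disjoint_right]
        intro x hx
        simp only [Finset.mem_insert, Finset.mem_singleton] at hx
        rcases hx with rfl | rfl
        · exact hasupp
        · exact hbsupp
      rw [hdisj.support_mul, support_swap hab, Finset.card_union_of_disjoint hdisjfin,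
        Finset.card_insert_of_notMem (by simp [hab]), Finset.card_singleton]
    omega
  · -- merge case
    have hmem : σ.cycleOf b ∈ σ.cycleFactorsFinset :=
      cycleOf_mem_cycleFactorsFinset_iff.mpr (mem_support.mpr hb)
    have hc : IsCycle (σ.cycleOf b) := isCycle_cycleOf σ hb
    set c := σ.cycleOf b with hcdef
    set g := σ * c⁻¹ with hgdef
    have hgc : σ = g * c := by rw [hgdef, inv_mul_cancel_right]
    have hd : Disjoint g c := disjoint_mul_inv_of_mem_cycleFactorsFinset hmem
    have hca : c a = a := by
      have : a ∉ c.support := fun h => hasupp (support_cycleOf_le σ b h)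
      exact notMem_support.mp this
    have hcb : c b ≠ b := by rw [hcdef, cycleOf_apply_self]; exact hb
    have hga : g a = a := by
      calc g a = g (c a) := by rw [hca]
        _ = σ a := by rw [hgc]; rfl
        _ = a := ha
    have hdc : IsCycle (c * Equiv.swap a b) := isCycle_cycle_mul_swap hc hca hcb
    have hds : (c * Equiv.swap a b).support = insert a c.support :=
      support_cycle_mul_swap hca hcb
    have hdisj2 : Disjoint g (c * Equiv.swap a b) := by
      intro x
      rcases hd x with hx | hx
      · exact Or.inl hx
      · rcases eq_or_ne x a with rfl | hxa
        · exact Or.inl hga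
        · refine Or.inr (notMem_support.mp ?_)
          rw [hds, Finset.mem_insert]
          push_neg
          exact ⟨hxa, fun h => (mem_support.mp h) hx⟩
    have heq : σ * Equiv.swap a b = g * (c * Equiv.swap a b) := by
      rw [hgc, mul_assoc]
    have hle : c.cycleType ≤ σ.cycleType := cycleType_le_of_mem_cycleFactorsFinset hmem
    have hctcard : 1 ≤ Multiset.card σ.cycleType := by
      have := Multiset.card_le_card hle
      rw [hc.cycleType] at this
      simpa using this
    have hct : Multiset.card (σ * Equiv.swap a b).cycleType
        = (Multiset.card σ.cycleType - 1) + 1 := by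
      rw [heq, hdisj2.cycleType_mul, hdc.cycleType,
        hgdef, cycleType_mul_inv_mem_cycleFactorsFinset_eq_sub hmem,
        Multiset.card_add, Multiset.card_sub hle, hc.cycleType]
      simp
    have hsup : (σ * Equiv.swap a b).support.card = σ.support.card + 1 := by
      have h1 : (σ * Equiv.swap a b).support = insert a σ.support := by
        rw [heq, hdisj2.support_mul, hds, hgc, hd.support_mul]
        rw [Finset.union_insert]  -- maybe
      rw [h1, Finset.card_insert_of_notMem hasupp]
    omega


lemma extendDomain_swap' {β : Type*} [DecidableEq β] {p : β → Prop} [DecidablePred p]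
    (f : α ≃ Subtype p) (x y : α) :
    (Equiv.swap x y).extendDomain f = Equiv.swap (f x : β) (f y : β) := by
  ext b
  by_cases hb : p b
  · rw [Perm.extendDomain_apply_subtype _ f hb]
    obtain ⟨a, ha⟩ : ∃ a, f a = ⟨b, hb⟩ := ⟨f.symm ⟨b, hb⟩, f.apply_symm_apply _⟩
    have hba : b = (f a : β) := by rw [ha]
    have hsymm : f.symm ⟨b, hb⟩ = a := by rw [← ha, f.symm_apply_apply]
    rw [hsymm]
    rcases eq_or_ne a x with rfl | hax
    · rw [Equiv.swap_apply_left, hba, Equiv.swap_apply_left]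
    rcases eq_or_ne a y with rfl | hay
    · rw [Equiv.swap_apply_right, hba, Equiv.swap_apply_right]
    · rw [Equiv.swap_apply_of_ne_of_ne hax hay, hba,
        Equiv.swap_apply_of_ne_of_ne
          (fun hh => hax (f.injective (Subtype.coe_injective hh)))
          (fun hh => hay (f.injective (Subtype.coe_injective hh)))]
  · rw [Perm.extendDomain_apply_not_subtype _ f hb,
      Equiv.swap_apply_of_ne_of_ne (a := (f x : β)) ?_ ?_]
    · intro hh; rw [hh] at hb; exact hb (f x).2
    · intro hh; rw [hh] at hb; exact hb (f y).2

lemma pivotProd_succ_eq (n : ℕ) (i : Fin (n+1) → Fin (n+1))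
    (i' : Fin n → Fin n) (hi' : ∀ k : Fin n, (i' k).succ = i k.succ) :
    pivotProd (n+1) i
      = (pivotProd n i').extendDomain (finSuccAboveEquiv (0 : Fin (n+1)))
          * Equiv.swap 0 (i 0) := by
  have hφ : ∀ k : Fin n, ((finSuccAboveEquiv (0 : Fin (n+1))) k : Fin (n+1)) = k.succ := by
    intro k
    simp [finSuccAboveEquiv_apply, Fin.succAbove_zero]
  rw [pivotProd, List.ofFn_succ, List.reverse_cons, List.prod_append, List.prod_singleton]
  congr 1
  have h2 : (pivotProd n i').extendDomain (finSuccAboveEquiv (0 : Fin (n+1)))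
      = ((List.ofFn fun k : Fin n => Equiv.swap k (i' k)).map
          (extendDomainHom (finSuccAboveEquiv (0 : Fin (n+1))))).reverse.prod := by
    rw [← List.map_reverse]
    exact map_list_prod (extendDomainHom (finSuccAboveEquiv (0 : Fin (n+1)))) _
  rw [h2, List.map_ofFn]
  have h3 : (fun k : Fin n => Equiv.swap k.succ (i k.succ))
      = (⇑(extendDomainHom (finSuccAboveEquiv (0 : Fin (n+1)))) ∘ fun k => Equiv.swap k (i' k)) := by
    funext k
    show Equiv.swap (Fin.succ k) (i (Fin.succ k))
      = (Equiv.swap k (i' k)).extendDomain (finSuccAboveEquiv (0 : Fin (n+1)))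
    rw [extendDomain_swap', hφ, hφ, hi']
  rw [h3]


/-- For `σ = (n-1, i_{n-1}) ⋯ (1, i_1)` with `k ≤ i_k`, the number of indices with
`i_k = k` equals the number of cycles of `σ` (fixed points counted as 1-cycles,
so the cycle count is `σ.cycleType.card` plus the number of fixed points). -/
theorem stmt1 (n : ℕ) (i : Fin n → Fin n) (h : ∀ k, k ≤ i k) :
    (Finset.univ.filter fun k : Fin n => i k = k).card =
      (pivotProd n i).cycleType.card +
        (Finset.univ.filter fun x : Fin n => pivotProd n i x = x).card := by
  induction n with
  | zero => simp [pivotProd]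
  | succ n ih =>
    have h2 : ∀ k : Fin n, (k : ℕ) + 1 ≤ (i k.succ : ℕ) := by
      intro k
      have := Fin.le_def.mp (h k.succ)
      simpa [Fin.val_succ] using this
    have hlt : ∀ k : Fin n, (i k.succ : ℕ) - 1 < n := by
      intro k
      have h1 := (i k.succ).isLt
      have := h2 k
      omega
    set i' : Fin n → Fin n := fun k => ⟨(i k.succ : ℕ) - 1, hlt k⟩ with hi'def
    have hval : ∀ k : Fin n, (i' k : ℕ) + 1 = (i k.succ : ℕ) := by
      intro k
      have := h2 k
      simp only [hi'def]
      omega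
    have hsucc : ∀ k : Fin n, (i' k).succ = i k.succ := by
      intro k
      apply Fin.ext
      rw [Fin.val_succ, hval k]
    have h' : ∀ k : Fin n, k ≤ i' k := by
      intro k
      rw [Fin.le_def]
      have := hval k
      have := h2 k
      omega
    have hiff : ∀ k : Fin n, (i k.succ = k.succ) ↔ (i' k = k) := by
      intro k
      rw [Fin.ext_iff, Fin.ext_iff]
      have := hval k
      rw [Fin.val_succ]
      omega
    set φ := finSuccAboveEquiv (0 : Fin (n+1)) with hφdef
    set σ' := pivotProd n i' with hσ'
    set E := σ'.extendDomain φ with hEdef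
    have hpp : pivotProd (n+1) i = E * Equiv.swap 0 (i 0) :=
      pivotProd_succ_eq n i i' hsucc
    have hE0 : E 0 = 0 := Perm.extendDomain_apply_not_subtype _ _ (by simp)
    have hφk : ∀ k : Fin n, (φ k : Fin (n+1)) = k.succ := by
      intro k
      simp [hφdef, finSuccAboveEquiv_apply, Fin.succAbove_zero]
    have hEs : ∀ k : Fin n, E k.succ = (σ' k).succ := by
      intro k
      calc E k.succ = E (φ k : Fin (n+1)) := by rw [hφk]
        _ = (φ (σ' k) : Fin (n+1)) := Perm.extendDomain_apply_image σ' φ k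
        _ = (σ' k).succ := hφk _
    have hLHS : (univ.filter fun k : Fin (n+1) => i k = k).card
        = (if i 0 = 0 then 1 else 0) + (univ.filter fun k : Fin n => i' k = k).card := by
      rw [Finset.card_filter, Finset.card_filter, Fin.sum_univ_succ]
      congr 1
      exact Finset.sum_congr rfl fun k _ => by rw [if_congr (hiff k) rfl rfl]
    have hfixE : (univ.filter fun x : Fin (n+1) => E x = x).card
        = 1 + (univ.filter fun k : Fin n => σ' k = k).card := by
      rw [Finset.card_filter, Finset.card_filter, Fin.sum_univ_succ, if_pos hE0]
      congr 1
      refine Finset.sum_congr rfl fun k _ => ?_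
      refine if_congr ?_ rfl rfl
      rw [hEs k, Fin.succ_inj]
    have hctE : Multiset.card E.cycleType = Multiset.card σ'.cycleType := by
      rw [hEdef, cycleType_extendDomain]
    have hihn := ih i' h'
    rw [← hσ'] at hihn
    by_cases hj : i 0 = 0
    · have hpE : pivotProd (n+1) i = E := by
        rw [hpp, hj, Equiv.swap_self, ← Equiv.Perm.one_def, mul_one]
      rw [hLHS, if_pos hj, hpE, hctE, hfixE]
      omega
    · have h0j : (0 : Fin (n+1)) ≠ i 0 := fun hh => hj hh.symm
      have hm := merge_count E 0 (i 0) hE0 h0j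
      rw [hctE, hfixE] at hm
      rw [hLHS, if_neg hj, hpp]
      omega

end aux
end

section
/- A permutation σ = (n-1, i_{n-1}) ⋯ (2, i_2)(1, i_1) with k ≤ i_k ≤ n for all k is an n-cycle if and only if i_k > k for all k = 1, …, n-1. Consequently, if each i_k is chosen independently and uniformly from {k+1, …, n}, the resulting permutation is a uniformly random n-cycle. -/
instance instNonemptyStrictPivotTuples (n : ℕ) :
    Nonempty {f : Fin n → Fin n //
      (∀ k, k ≤ f k) ∧ ∀ k : Fin n, (k : ℕ) < n - 1 → k < f k} := by
  refine ⟨⟨fun k => if h : (k : ℕ) + 1 < n then ⟨(k : ℕ) + 1, h⟩ else k, ?_, ?_⟩⟩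
  · intro k
    by_cases h : (k : ℕ) + 1 < n
    · simp only [dif_pos h]
      exact le_of_lt (by simp [Fin.lt_def])
    · simp [dif_neg h]
  · intro k hk
    have h : (k : ℕ) + 1 < n := by omega
    simp only [dif_pos h]
    simp [Fin.lt_def]

namespace Stmt9Aux
open Equiv Equiv.Perm
variable {n : ℕ}




variable {n : ℕ}

def R (n : ℕ) (f : Fin n → Fin n) (m : ℕ) : Equiv.Perm (Fin n) :=
  (((List.ofFn fun k : Fin n => Equiv.swap k (f k)).drop m).reverse).prod

lemma R_nil (f : Fin n → Fin n) {m : ℕ} (h : n ≤ m) : R n f m = 1 := by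
  rw [R, List.drop_eq_nil_of_le (by simpa using h)]
  simp

lemma R_succ (f : Fin n → Fin n) {m : ℕ} (hm : m < n) :
    R n f m = R n f (m + 1) * Equiv.swap ⟨m, hm⟩ (f ⟨m, hm⟩) := by
  have hlen : m < (List.ofFn fun k : Fin n => Equiv.swap k (f k)).length := by
    simpa using hm
  rw [R, List.drop_eq_getElem_cons hlen, List.reverse_cons, List.prod_append]
  simp [R, List.getElem_ofFn]

lemma pivotProd_eq (f : Fin n → Fin n) :
    (((List.ofFn fun k : Fin n => Equiv.swap k (f k)).reverse).prod) = R n f 0 := rfl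

lemma R_congr_aux (f g : Fin n → Fin n) :
    ∀ d m, n ≤ m + d → (∀ k : Fin n, m ≤ (k : ℕ) → f k = g k) → R n f m = R n g m := by
  intro d
  induction d with
  | zero => intro m h _; rw [R_nil f (by omega), R_nil g (by omega)]
  | succ d ih =>
    intro m h hfg
    by_cases hm : m < n
    · rw [R_succ f hm, R_succ g hm, ih (m + 1) (by omega) (fun k hk => hfg k (by omega)),
        hfg ⟨m, hm⟩ (le_refl m)]
    · rw [R_nil f (by omega), R_nil g (by omega)]

lemma R_congr {f g : Fin n → Fin n} {m : ℕ}
    (hfg : ∀ k : Fin n, m ≤ (k : ℕ) → f k = g k) : R n f m = R n g m :=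
  R_congr_aux f g n m (by omega) hfg

lemma R_fix_aux (f : Fin n → Fin n) (hle : ∀ k, k ≤ f k) :
    ∀ d m, n ≤ m + d → ∀ j : Fin n, (j : ℕ) < m → R n f m j = j := by
  intro d
  induction d with
  | zero => intro m h j hj; rw [R_nil f (by omega)]; rfl
  | succ d ih =>
    intro m h j hj
    by_cases hm : m < n
    · rw [R_succ f hm]
      have h1 : j ≠ ⟨m, hm⟩ := by
        intro hc; rw [hc] at hj; exact absurd hj (lt_irrefl m)
      have h2 : j ≠ f ⟨m, hm⟩ := by
        intro hc
        have h3 : m ≤ ((f ⟨m, hm⟩ : Fin n) : ℕ) := by simpa [Fin.le_def] using hle ⟨m, hm⟩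
        rw [hc] at hj
        omega
      simp only [Equiv.Perm.mul_apply, Equiv.swap_apply_of_ne_of_ne h1 h2]
      exact ih (m + 1) (by omega) j (by omega)
    · rw [R_nil f (by omega)]; rfl

lemma R_fix {f : Fin n → Fin n} (hle : ∀ k, k ≤ f k) {m : ℕ} {j : Fin n}
    (hj : (j : ℕ) < m) : R n f m j = j :=
  R_fix_aux f hle n m (by omega) j hj








/-- Merging: if `τ` fixes `x` and `a ≠ x`, then in `τ * swap x a` the point `x`
is in the same cycle as every point of the `τ`-orbit of `a`. -/
lemma merge_lemma {τ : Equiv.Perm (Fin n)} {x a : Fin n} (hxa : x ≠ a) (hfix : τ x = x) :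
    ∀ t : ℕ, Equiv.Perm.SameCycle (τ * Equiv.swap x a) x ((τ ^ t) a) := by
  intro t
  induction t with
  | zero =>
    have h0 : (τ * Equiv.swap x a) a = x := by
      simp [Equiv.Perm.mul_apply, Equiv.swap_apply_right, hfix]
    refine Equiv.Perm.SameCycle.symm ⟨1, ?_⟩
    simpa using h0
  | succ t ih =>
    set y := (τ ^ t) a with hy
    have hyx : y ≠ x := by
      intro hc
      have : (τ ^ t) x = x := Equiv.Perm.pow_apply_eq_self_of_apply_eq_self hfix t
      exact hxa (((τ ^ t).injective (by rw [this, ← hc])).symm)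
    have hstep : (τ ^ (t + 1)) a = τ y := by
      rw [pow_succ', Equiv.Perm.mul_apply]
    by_cases hya : y = a
    · have : (τ * Equiv.swap x a) x = τ y := by
        simp [Equiv.Perm.mul_apply, Equiv.swap_apply_left, hya]
      rw [hstep]
      exact ⟨1, by simpa using this⟩
    · have : (τ * Equiv.swap x a) y = τ y := by
        simp [Equiv.Perm.mul_apply, Equiv.swap_apply_of_ne_of_ne hyx hya]
      rw [hstep]
      exact ih.trans ⟨1, by simpa using this⟩

/-- Splitting: trajectory of `σ * swap x (σ⁻¹ x)` starting at `σ x` follows `σ`'s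
trajectory until it returns to `x`. -/
lemma split_lemma {σ : Equiv.Perm (Fin n)} {x : Fin n} :
    ∀ t : ℕ, (σ ^ (t + 1)) x = x ∨
      Equiv.Perm.SameCycle (σ * Equiv.swap x (σ⁻¹ x)) (σ x) ((σ ^ (t + 1)) x) := by
  intro t
  induction t with
  | zero => exact Or.inr (by rw [pow_one])
  | succ t ih =>
    by_cases h0 : (σ ^ (t + 1)) x = x
    · right
      have : (σ ^ (t + 2)) x = σ x := by
        rw [pow_succ', Equiv.Perm.mul_apply, h0]
      rw [this]
    · rcases ih with h | h
      · exact absurd h h0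
      · set y := (σ ^ (t + 1)) x with hy
        have hstep : (σ ^ (t + 2)) x = σ y := by rw [pow_succ', Equiv.Perm.mul_apply]
        by_cases hya : y = σ⁻¹ x
        · left
          rw [hstep, hya]
          exact Equiv.apply_symm_apply σ x
        · right
          have : (σ * Equiv.swap x (σ⁻¹ x)) y = σ y := by
            rw [Equiv.Perm.mul_apply, Equiv.swap_apply_of_ne_of_ne h0 hya]
          rw [hstep]
          exact h.trans ⟨1, by simpa using this⟩

/-- Strict tuples: `{m, ..., n-1}` lies in a single cycle of `R n f m`. -/
lemma C_lemma {f : Fin n → Fin n} (hle : ∀ k, k ≤ f k)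
    (hstrict : ∀ k : Fin n, (k : ℕ) < n - 1 → k < f k) :
    ∀ d m (hm : m < n), n = m + 1 + d → ∀ j : Fin n, m ≤ (j : ℕ) →
      Equiv.Perm.SameCycle (R n f m) ⟨m, hm⟩ j := by
  intro d
  induction d with
  | zero =>
    intro m hm hd j hj
    have hjm : j = ⟨m, hm⟩ := Fin.ext_iff.mpr (show (j : ℕ) = m by have := j.isLt; omega)
    rw [hjm]
  | succ d ih =>
    intro m hm hd j hj
    have hm1 : m + 1 < n := by omega
    have hma : m < ((f ⟨m, hm⟩ : Fin n) : ℕ) := hstrict ⟨m, hm⟩ (show m < n - 1 by omega)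
    have hxa : (⟨m, hm⟩ : Fin n) ≠ f ⟨m, hm⟩ := fun hc => by
      rw [← hc] at hma; exact absurd hma (show ¬(m < m) from lt_irrefl m)
    have hfixx : R n f (m + 1) ⟨m, hm⟩ = ⟨m, hm⟩ := R_fix hle (Nat.lt_succ_self m)
    rw [R_succ f hm]
    by_cases hjx : j = ⟨m, hm⟩
    · rw [hjx]
    · have hj1 : m + 1 ≤ (j : ℕ) := by
        have h2 : (j : ℕ) ≠ m := fun hc => hjx (Fin.ext_iff.mpr (show (j : ℕ) = m from hc))
        omega
      have ha1 : m + 1 ≤ ((f ⟨m, hm⟩ : Fin n) : ℕ) := by omega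
      have hsc := ((ih (m + 1) hm1 (by omega) (f ⟨m, hm⟩) ha1).symm.trans
        (ih (m + 1) hm1 (by omega) j hj1))
      obtain ⟨t, -, ht⟩ := hsc.exists_pow_eq'
      rw [← ht]
      exact merge_lemma hxa hfixx t

/-- Existence and uniqueness of the strict pivot tuple representing a permutation
which fixes everything below `m` and has `{m, ..., n-1}` in one cycle. -/
lemma D_lemma :
    ∀ d m (hm : m < n), n = m + 1 + d → ∀ σ : Equiv.Perm (Fin n),
    (∀ j : Fin n, (j : ℕ) < m → σ j = j) →
    (∀ j : Fin n, m ≤ (j : ℕ) → Equiv.Perm.SameCycle σ ⟨m, hm⟩ j) →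
    ∃! f : Fin n → Fin n,
      (∀ k : Fin n, (k : ℕ) < m → f k = k) ∧ (∀ k, k ≤ f k) ∧
      (∀ k : Fin n, m ≤ (k : ℕ) → (k : ℕ) < n - 1 → k < f k) ∧ R n f m = σ := by
  intro d
  induction d with
  | zero =>
    intro m hm hd σ hfix hcyc
    have hσ1 : σ = 1 := by
      have hσm : σ ⟨m, hm⟩ = ⟨m, hm⟩ := by
        by_contra hc
        have h1 : ((σ ⟨m, hm⟩ : Fin n) : ℕ) < m := by
          have h2 := (σ ⟨m, hm⟩).isLt
          have h3 : ((σ ⟨m, hm⟩ : Fin n) : ℕ) ≠ m :=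
            fun hc2 => hc (Fin.ext_iff.mpr (show ((σ ⟨m, hm⟩ : Fin n) : ℕ) = m from hc2))
          omega
        exact hc (σ.injective (hfix _ h1))
      ext j
      by_cases hj : (j : ℕ) < m
      · rw [hfix j hj]; rfl
      · have hjm : j = ⟨m, hm⟩ := Fin.ext_iff.mpr (show (j : ℕ) = m by have := j.isLt; omega)
        rw [hjm, hσm]; rfl
    refine ⟨fun k => k, ⟨fun k _ => rfl, fun k => le_refl k,
      fun k h1 h2 => absurd h2 (by omega), ?_⟩, ?_⟩
    · have h1 : R n (fun k : Fin n => k) (m + 1) = 1 := R_nil _ (by omega)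
      rw [R_succ _ hm, h1, hσ1]
      simp
      rfl
    · intro g ⟨hg1, hg2, hg3, hg4⟩
      funext k
      by_cases hk : (k : ℕ) < m
      · exact hg1 k hk
      · have h1 : (k : ℕ) ≤ ((g k : Fin n) : ℕ) := hg2 k
        have h2 := (g k).isLt
        have h3 : (k : ℕ) = m := by have := k.isLt; omega
        exact Fin.ext_iff.mpr (show ((g k : Fin n) : ℕ) = (k : ℕ) by omega)
  | succ d ih =>
    intro m hm hd σ hfix hcyc
    have hm1 : m + 1 < n := by omega
    have hσx : σ ⟨m, hm⟩ ≠ ⟨m, hm⟩ := by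
      intro hc
      obtain ⟨t, ht⟩ := hcyc ⟨m + 1, hm1⟩ (Nat.le_succ m)
      have h2 : (σ ^ t) ⟨m, hm⟩ = ⟨m, hm⟩ :=
        Equiv.Perm.zpow_apply_eq_self_of_apply_eq_self hc t
      rw [ht] at h2
      have h3 : m + 1 = m := Fin.ext_iff.mp h2
      omega
    have hax : σ⁻¹ ⟨m, hm⟩ ≠ ⟨m, hm⟩ :=
      fun h => hσx ((Equiv.Perm.inv_eq_iff_eq.mp h).symm)
    have hma : m < ((σ⁻¹ ⟨m, hm⟩ : Fin n) : ℕ) := by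
      have hge : ¬ ((σ⁻¹ ⟨m, hm⟩ : Fin n) : ℕ) < m := fun h => by
        have h2 := hfix _ h
        rw [(show ∀ y, σ (σ⁻¹ y) = y from Equiv.apply_symm_apply σ)] at h2
        exact hax h2.symm
      have hne : ((σ⁻¹ ⟨m, hm⟩ : Fin n) : ℕ) ≠ m :=
        fun h => hax (Fin.ext_iff.mpr (show ((σ⁻¹ ⟨m, hm⟩ : Fin n) : ℕ) = m from h))
      omega
    have hfix' : ∀ j : Fin n, (j : ℕ) < m + 1 →
        (σ * Equiv.swap ⟨m, hm⟩ (σ⁻¹ ⟨m, hm⟩)) j = j := by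
      intro j hj
      rcases Nat.lt_or_ge (j : ℕ) m with h | h
      · have h1 : j ≠ ⟨m, hm⟩ := fun hc => by
          rw [hc] at h; exact absurd (h : m < m) (lt_irrefl m)
        have h2 : j ≠ σ⁻¹ ⟨m, hm⟩ := fun hc => by rw [hc] at h; omega
        rw [Equiv.Perm.mul_apply, Equiv.swap_apply_of_ne_of_ne h1 h2]
        exact hfix j h
      · have hj2 : j = ⟨m, hm⟩ := Fin.ext_iff.mpr (show (j : ℕ) = m by omega)
        rw [hj2, Equiv.Perm.mul_apply, Equiv.swap_apply_left, (show ∀ y, σ (σ⁻¹ y) = y from Equiv.apply_symm_apply σ)]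
    have hkey : ∀ j : Fin n, m + 1 ≤ (j : ℕ) →
        Equiv.Perm.SameCycle (σ * Equiv.swap ⟨m, hm⟩ (σ⁻¹ ⟨m, hm⟩)) (σ ⟨m, hm⟩) j := by
      intro j hj
      have hjx : j ≠ ⟨m, hm⟩ := fun hc => by rw [hc] at hj; exact absurd hj (show ¬(m + 1 ≤ m) by omega)
      obtain ⟨t, -, ht⟩ := (hcyc j (by omega)).exists_pow_eq'
      cases t with
      | zero =>
        have : (⟨m, hm⟩ : Fin n) = j := by simpa using ht
        exact absurd this.symm hjx
      | succ t =>
        rcases split_lemma (σ := σ) (x := ⟨m, hm⟩) t with h | h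
        · rw [ht] at h; exact absurd h hjx
        · rw [ht] at h; exact h
    have hcyc' : ∀ j : Fin n, m + 1 ≤ (j : ℕ) →
        Equiv.Perm.SameCycle (σ * Equiv.swap ⟨m, hm⟩ (σ⁻¹ ⟨m, hm⟩)) ⟨m + 1, hm1⟩ j :=
      fun j hj => (hkey ⟨m + 1, hm1⟩ (Nat.le_refl (m + 1))).symm.trans (hkey j hj)
    obtain ⟨f', ⟨hf1, hf2, hf3, hf4⟩, huniq⟩ := ih (m + 1) hm1 (by omega) _ hfix' hcyc'
    have hcong : R n (Function.update f' ⟨m, hm⟩ (σ⁻¹ ⟨m, hm⟩)) (m + 1) = R n f' (m + 1) :=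
      R_congr (fun k hk =>
        Function.update_of_ne (fun hc => by rw [hc] at hk; exact absurd hk (show ¬(m + 1 ≤ m) by omega)) _ _)
    refine ⟨Function.update f' ⟨m, hm⟩ (σ⁻¹ ⟨m, hm⟩), ⟨?_, ?_, ?_, ?_⟩, ?_⟩
    · intro k hk
      rw [Function.update_of_ne (fun hc => by rw [hc] at hk; exact absurd hk (show ¬(m < m) from lt_irrefl m))]
      exact hf1 k (by omega)
    · intro k
      by_cases hk : k = ⟨m, hm⟩
      · rw [hk, Function.update_self]
        exact le_of_lt (show (⟨m, hm⟩ : Fin n) < σ⁻¹ ⟨m, hm⟩ from hma)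
      · rw [Function.update_of_ne hk]; exact hf2 k
    · intro k hk1 hk2
      by_cases hk : k = ⟨m, hm⟩
      · rw [hk, Function.update_self]
        exact (show (⟨m, hm⟩ : Fin n) < σ⁻¹ ⟨m, hm⟩ from hma)
      · rw [Function.update_of_ne hk]
        exact hf3 k (by
          have h2 : (k : ℕ) ≠ m := fun hc => hk (Fin.ext_iff.mpr (show (k : ℕ) = m from hc))
          omega) hk2
    · rw [R_succ _ hm, Function.update_self, hcong, hf4, mul_assoc, Equiv.swap_mul_self, mul_one]
    · intro g ⟨hg1, hg2, hg3, hg4⟩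
      rw [R_succ _ hm] at hg4
      have hgx : σ (g ⟨m, hm⟩) = ⟨m, hm⟩ := by
        rw [← hg4, Equiv.Perm.mul_apply, Equiv.swap_apply_right]
        exact R_fix hg2 (Nat.lt_succ_self m)
      have hga : g ⟨m, hm⟩ = σ⁻¹ ⟨m, hm⟩ := by
        apply_fun σ
        rw [hgx, (show ∀ y, σ (σ⁻¹ y) = y from Equiv.apply_symm_apply σ)]
      have hRg : R n g (m + 1) = σ * Equiv.swap ⟨m, hm⟩ (σ⁻¹ ⟨m, hm⟩) := by
        rw [← hga, ← hg4, mul_assoc, Equiv.swap_mul_self, mul_one]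
      have hgf' : Function.update g ⟨m, hm⟩ ⟨m, hm⟩ = f' := by
        apply huniq
        refine ⟨?_, ?_, ?_, ?_⟩
        · intro k hk
          by_cases hkx : k = ⟨m, hm⟩
          · rw [hkx, Function.update_self]
          · rw [Function.update_of_ne hkx]
            exact hg1 k (by
              have h2 : (k : ℕ) ≠ m := fun hc => hkx (Fin.ext_iff.mpr (show (k : ℕ) = m from hc))
              omega)
        · intro k
          by_cases hkx : k = ⟨m, hm⟩
          · rw [hkx, Function.update_self]
          · rw [Function.update_of_ne hkx]; exact hg2 k
        · intro k hk1 hk2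
          rw [Function.update_of_ne (fun hc => by rw [hc] at hk1; exact absurd hk1 (show ¬(m + 1 ≤ m) by omega))]
          exact hg3 k (by omega) hk2
        · have hcong2 : R n (Function.update g ⟨m, hm⟩ ⟨m, hm⟩) (m + 1) = R n g (m + 1) :=
            R_congr (fun k hk =>
              Function.update_of_ne (fun hc => by rw [hc] at hk; exact absurd hk (show ¬(m + 1 ≤ m) by omega)) _ _)
          rw [hcong2, hRg]
      funext k
      by_cases hkx : k = ⟨m, hm⟩
      · rw [hkx, Function.update_self, hga]
      · rw [Function.update_of_ne hkx, ← hgf', Function.update_of_ne hkx]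

/-! ### Root function for the functional graph `j ↦ i j` -/

def iter (i : Fin n → Fin n) : ℕ → Fin n → Fin n
  | 0, j => j
  | t + 1, j => if i j = j then j else iter i t (i j)

lemma iter_fixed {i : Fin n → Fin n} {j : Fin n} (h : i j = j) :
    ∀ t, iter i t j = j := by
  intro t; cases t with
  | zero => rfl
  | succ t => simp [iter, h]

lemma iter_succ_ne {i : Fin n → Fin n} {j : Fin n} (h : i j ≠ j) (t : ℕ) :
    iter i (t + 1) j = iter i t (i j) := by simp [iter, h]

lemma lt_of_le_ne {i : Fin n → Fin n} (hle : ∀ k, k ≤ i k) {j : Fin n} (h : i j ≠ j) :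
    (j : ℕ) < ((i j : Fin n) : ℕ) := by
  have h1 : (j : ℕ) ≤ ((i j : Fin n) : ℕ) := hle j
  have h2 : (j : ℕ) ≠ ((i j : Fin n) : ℕ) := fun hc => h (Fin.ext_iff.mpr hc.symm)
  omega

lemma iter_spec {i : Fin n → Fin n} (hle : ∀ k, k ≤ i k) :
    ∀ t (j : Fin n), n ≤ t + (j : ℕ) + 1 → i (iter i t j) = iter i t j := by
  intro t
  induction t with
  | zero =>
    intro j hj
    have h2 := (i j).isLt
    have h1 : (j : ℕ) ≤ ((i j : Fin n) : ℕ) := hle j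
    exact Fin.ext_iff.mpr (show ((i j : Fin n) : ℕ) = (j : ℕ) by omega)
  | succ t ih =>
    intro j hj
    by_cases h : i j = j
    · rw [iter_fixed h]; exact h
    · rw [iter_succ_ne h]
      exact ih (i j) (by have := lt_of_le_ne hle h; omega)

lemma iter_stable {i : Fin n → Fin n} (hle : ∀ k, k ≤ i k) :
    ∀ t (j : Fin n), n ≤ t + (j : ℕ) + 1 → iter i (t + 1) j = iter i t j := by
  intro t
  induction t with
  | zero =>
    intro j hj
    by_cases h : i j = j
    · exact iter_fixed h 1
    · exact absurd (lt_of_le_ne hle h) (by have := (i j).isLt; omega)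
  | succ t ih =>
    intro j hj
    by_cases h : i j = j
    · rw [iter_fixed h, iter_fixed h]
    · rw [iter_succ_ne h, iter_succ_ne h]
      exact ih (i j) (by have := lt_of_le_ne hle h; omega)

def root (i : Fin n → Fin n) (j : Fin n) : Fin n := iter i n j

lemma root_apply {i : Fin n → Fin n} (hle : ∀ k, k ≤ i k) {j : Fin n} (h : i j ≠ j) :
    root i (i j) = root i j := by
  have hn : 0 < n := Fin.pos j
  have h1 : iter i n j = iter i (n - 1) (i j) := by
    have := iter_succ_ne h (n - 1)
    rw [← this]
    exact congrArg (fun t => iter i t j) (by omega)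
  have h2 : iter i n (i j) = iter i (n - 1) (i j) := by
    have h3 := iter_stable hle (n - 1) (i j) (by have := lt_of_le_ne hle h; omega)
    rw [← h3]
    exact congrArg (fun t => iter i t (i j)) (by omega)
  rw [root, root, h1, h2]

lemma root_fixed {i : Fin n → Fin n} {j : Fin n} (h : i j = j) : root i j = j :=
  iter_fixed h n

/-- Invariance of `root`-fibers under the product permutation. -/
lemma prod_mem_iff {A : Fin n → Prop} :
    ∀ L : List (Equiv.Perm (Fin n)), (∀ p ∈ L, ∀ x, A (p x) ↔ A x) →
      ∀ x, A (L.prod x) ↔ A x := by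
  intro L
  induction L with
  | nil => intro _ x; simp
  | cons p L ih =>
    intro h x
    rw [List.prod_cons, Equiv.Perm.mul_apply]
    rw [h p (List.mem_cons_self) _]
    exact ih (fun q hq => h q (List.mem_cons_of_mem p hq)) x

lemma pow_mem_iff {A : Fin n → Prop} {σ : Equiv.Perm (Fin n)}
    (h : ∀ x, A (σ x) ↔ A x) : ∀ t : ℕ, ∀ x, A ((σ ^ t) x) ↔ A x := by
  intro t
  induction t with
  | zero => intro x; simp
  | succ t ih =>
    intro x
    rw [pow_succ', Equiv.Perm.mul_apply, h _]
    exact ih x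

lemma pivot_invariant {i : Fin n → Fin n} (hle : ∀ k, k ≤ i k) {k0 : Fin n}
    (hfix : i k0 = k0) :
    ∀ x : Fin n, (root i (R n i 0 x) = k0) ↔ (root i x = k0) := by
  have hswaps : ∀ p ∈ ((List.ofFn fun k : Fin n => Equiv.swap k (i k)).drop 0).reverse,
      ∀ x, (root i (p x) = k0) ↔ (root i x = k0) := by
    intro p hp x
    rw [List.drop_zero, List.mem_reverse, List.mem_ofFn] at hp
    obtain ⟨k, rfl⟩ := hp
    show root i (Equiv.swap k (i k) x) = k0 ↔ root i x = k0
    by_cases h : i k = k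
    · rw [h, Equiv.swap_self]
      rfl
    · have hr := root_apply hle h
      by_cases hx : x = k
      · rw [hx, Equiv.swap_apply_left, hr]
      · by_cases hx2 : x = i k
        · rw [hx2, Equiv.swap_apply_right, hr]
        · rw [Equiv.swap_apply_of_ne_of_ne hx hx2]
  intro x
  exact prod_mem_iff (A := fun y => root i y = k0) _ hswaps x

/-! ### Orbit-count characterizations -/

lemma count_one {σ : Equiv.Perm (Fin n)} (h2 : 2 ≤ n)
    (hc : σ.cycleType.card + (Finset.univ.filter fun x : Fin n => σ x = x).card = 1) :
    σ.IsCycle ∧ ∀ x : Fin n, σ x ≠ x := by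
  by_cases hσ : σ = 1
  · subst hσ
    rw [Equiv.Perm.cycleType_one] at hc
    simp only [Equiv.Perm.one_apply, Finset.filter_true, Finset.card_univ,
      Fintype.card_fin] at hc
    omega
  · have h1 : Multiset.card σ.cycleType ≠ 0 :=
      fun h => hσ (Equiv.Perm.card_cycleType_eq_zero.mp h)
    have h3 : Multiset.card σ.cycleType = 1 ∧
        (Finset.univ.filter fun x : Fin n => σ x = x).card = 0 := by
      constructor <;> omega
    refine ⟨Equiv.Perm.card_cycleType_eq_one.mp h3.1, ?_⟩
    intro x hx
    have h4 : x ∈ Finset.univ.filter fun x : Fin n => σ x = x := by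
      simp [hx]
    rw [Finset.card_eq_zero] at h3
    exact absurd (h3.2 ▸ h4) (Finset.notMem_empty x)

lemma count_of {σ : Equiv.Perm (Fin n)} (hc : σ.IsCycle) (hall : ∀ x : Fin n, σ x ≠ x) :
    σ.cycleType.card + (Finset.univ.filter fun x : Fin n => σ x = x).card = 1 := by
  have h1 : Multiset.card σ.cycleType = 1 := Equiv.Perm.card_cycleType_eq_one.mpr hc
  have h2 : (Finset.univ.filter fun x : Fin n => σ x = x) = ∅ :=
    Finset.filter_eq_empty_iff.mpr (fun {x} _ => hall x)
  rw [h1, h2]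
  rfl

/-! ### Cardinality of the strict tuple set -/

lemma card_strict (n : ℕ) (hn : 0 < n) :
    Fintype.card {f : Fin n → Fin n //
      (∀ k, k ≤ f k) ∧ ∀ k : Fin n, (k : ℕ) < n - 1 → k < f k} = (n - 1).factorial := by
  have e1 : {f : Fin n → Fin n //
        (∀ k, k ≤ f k) ∧ ∀ k : Fin n, (k : ℕ) < n - 1 → k < f k} ≃
      {f : Fin n → Fin n // ∀ k : Fin n, k ≤ f k ∧ ((k : ℕ) < n - 1 → k < f k)} :=
    Equiv.subtypeEquivRight (fun f =>
      ⟨fun h k => ⟨h.1 k, h.2 k⟩, fun h => ⟨fun k => (h k).1, fun k => (h k).2⟩⟩)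
  have e2 : {f : Fin n → Fin n // ∀ k : Fin n, k ≤ f k ∧ ((k : ℕ) < n - 1 → k < f k)} ≃
      ∀ k : Fin n, {x : Fin n // k ≤ x ∧ ((k : ℕ) < n - 1 → k < x)} :=
    Equiv.subtypePiEquivPi (p := fun (k : Fin n) (x : Fin n) => k ≤ x ∧ ((k : ℕ) < n - 1 → k < x))
  rw [Fintype.card_congr (e1.trans e2), Fintype.card_pi]
  have hcard : ∀ k : Fin n, Fintype.card {x : Fin n // k ≤ x ∧ ((k : ℕ) < n - 1 → k < x)} =
      if (k : ℕ) < n - 1 then n - 1 - (k : ℕ) else 1 := by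
    intro k
    by_cases hk : (k : ℕ) < n - 1
    · rw [if_pos hk]
      have e3 : {x : Fin n // k ≤ x ∧ ((k : ℕ) < n - 1 → k < x)} ≃ (Set.Ioi k) :=
        Equiv.subtypeEquivRight (fun x => ⟨fun h => h.2 hk, fun h => ⟨le_of_lt h, fun _ => h⟩⟩)
      rw [Fintype.card_congr e3, Fintype.card_Ioi, Fin.card_Ioi]
    · rw [if_neg hk]
      have e3 : {x : Fin n // k ≤ x ∧ ((k : ℕ) < n - 1 → k < x)} ≃ (Set.Ici k) :=
        Equiv.subtypeEquivRight (fun x => ⟨fun h => h.1, fun h => ⟨h, fun hc => absurd hc hk⟩⟩)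
      rw [Fintype.card_congr e3, Fintype.card_Ici, Fin.card_Ici]
      have := k.isLt
      omega
  rw [Finset.prod_congr rfl (fun k _ => hcard k)]
  rw [Fin.prod_univ_eq_prod_range (fun k => if k < n - 1 then n - 1 - k else 1) n]
  obtain ⟨m, rfl⟩ : ∃ m, n = m + 1 := ⟨n - 1, by omega⟩
  simp only [Nat.add_sub_cancel]
  rw [Finset.prod_range_succ, if_neg (lt_irrefl m), mul_one]
  have h4 : ∀ x ∈ Finset.range m, (if x < m then m - x else 1) = (fun j => j + 1) (m - 1 - x) := by
    intro x hx
    rw [Finset.mem_range] at hx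
    rw [if_pos hx]
    show m - x = m - 1 - x + 1
    omega
  rw [Finset.prod_congr rfl h4, Finset.prod_range_reflect (fun j => j + 1) m,
    Finset.prod_range_add_one_eq_factorial]

lemma pivotProd_eq_R (f : Fin n → Fin n) : pivotProd n f = R n f 0 := rfl

end Stmt9Aux

/-- A permutation `σ = (n-1, i_{n-1}) ⋯ (1, i_1)` with `k ≤ i_k` is an `n`-cycle
(exactly one orbit, i.e. one cycle counting fixed points as 1-cycles) iff
`i_k > k` for all `k` below the top index; and choosing the `i_k` independently and
uniformly with `i_k > k` yields a uniformly random `n`-cycle (each `n`-cycle gets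
probability `1/(n-1)!`). -/
theorem stmt9 (n : ℕ) (hn : 0 < n) :
    (∀ i : Fin n → Fin n, (∀ k, k ≤ i k) →
      (((pivotProd n i).cycleType.card +
          (Finset.univ.filter fun x : Fin n => pivotProd n i x = x).card = 1)
        ↔ ∀ k : Fin n, (k : ℕ) < n - 1 → k < i k)) ∧
    (∀ σ : Equiv.Perm (Fin n),
      σ.cycleType.card + (Finset.univ.filter fun x : Fin n => σ x = x).card = 1 →
      ((PMF.uniformOfFintype {f : Fin n → Fin n //
            (∀ k, k ≤ f k) ∧ ∀ k : Fin n, (k : ℕ) < n - 1 → k < f k}).map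
          (fun i => pivotProd n i.1)) σ = ((n - 1).factorial : ENNReal)⁻¹) := by
  constructor
  · intro i hle
    constructor
    · -- one orbit → strict
      intro hcount
      by_contra hstr
      push_neg at hstr
      obtain ⟨k0, hk0, hk0'⟩ := hstr
      have hik0 : i k0 = k0 := by
        have h1 : (k0 : ℕ) ≤ ((i k0 : Fin n) : ℕ) := hle k0
        have h2 : ((i k0 : Fin n) : ℕ) ≤ (k0 : ℕ) := hk0'
        exact Fin.ext_iff.mpr (show ((i k0 : Fin n) : ℕ) = (k0 : ℕ) by omega)
      have h2n : 2 ≤ n := by have := k0.isLt; omega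
      obtain ⟨hcyc, hall⟩ := Stmt9Aux.count_one h2n hcount
      have hlt : n - 1 < n := by omega
      have hlast : i ⟨n - 1, hlt⟩ = ⟨n - 1, hlt⟩ := by
        have h1 : (n - 1 : ℕ) ≤ ((i ⟨n - 1, hlt⟩ : Fin n) : ℕ) := hle ⟨n - 1, hlt⟩
        have h2 := (i ⟨n - 1, hlt⟩).isLt
        exact Fin.ext_iff.mpr (show ((i ⟨n - 1, hlt⟩ : Fin n) : ℕ) = (n - 1 : ℕ) by omega)
      obtain ⟨t, ht⟩ := hcyc.exists_pow_eq (hall k0) (hall ⟨n - 1, hlt⟩)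
      have hinv : ∀ x : Fin n,
          (Stmt9Aux.root i ((pivotProd n i) x) = k0) ↔ (Stmt9Aux.root i x = k0) :=
        Stmt9Aux.pivot_invariant hle hik0
      have hAk0 : Stmt9Aux.root i ((pivotProd n i ^ t) k0) = k0 :=
        (Stmt9Aux.pow_mem_iff (A := fun x => Stmt9Aux.root i x = k0)
          (σ := pivotProd n i) hinv t k0).mpr (Stmt9Aux.root_fixed hik0)
      rw [ht, Stmt9Aux.root_fixed hlast] at hAk0
      have h9 : n - 1 = (k0 : ℕ) := Fin.ext_iff.mp hAk0
      omega
    · -- strict → one orbit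
      intro hstrict
      have hcyc0 := Stmt9Aux.C_lemma hle hstrict (n - 1) 0 hn (by omega)
      by_cases h2 : 2 ≤ n
      · have h0 : pivotProd n i ⟨0, hn⟩ ≠ ⟨0, hn⟩ := by
          intro hfix0
          obtain ⟨t, ht⟩ := hcyc0 ⟨1, h2⟩ (Nat.zero_le _)
          have hA : ((Stmt9Aux.R n i 0 : Equiv.Perm (Fin n)) ^ t) ⟨0, hn⟩ = ⟨0, hn⟩ :=
            Equiv.Perm.zpow_apply_eq_self_of_apply_eq_self hfix0 t
          rw [ht] at hA
          have h8 : (1 : ℕ) = 0 := Fin.ext_iff.mp hA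
          omega
        have hall : ∀ x : Fin n, pivotProd n i x ≠ x := by
          intro x hx
          obtain ⟨t, ht⟩ := (hcyc0 x (Nat.zero_le _)).symm
          have hA : ((Stmt9Aux.R n i 0 : Equiv.Perm (Fin n)) ^ t) x = x :=
            Equiv.Perm.zpow_apply_eq_self_of_apply_eq_self hx t
          rw [ht] at hA
          exact h0 (hA ▸ hx)
        have hcycle : (pivotProd n i).IsCycle :=
          ⟨⟨0, hn⟩, h0, fun y _ => hcyc0 y (Nat.zero_le _)⟩
        exact Stmt9Aux.count_of hcycle hall
      · have hn1 : n = 1 := by omega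
        subst hn1
        have hσ1 : pivotProd 1 i = 1 := Equiv.ext fun j => Subsingleton.elim _ _
        rw [hσ1, Equiv.Perm.cycleType_one]
        simp
  · intro σ hcount
    have hcyc0 : ∀ j : Fin n, (0 : ℕ) ≤ (j : ℕ) → Equiv.Perm.SameCycle σ ⟨0, hn⟩ j := by
      by_cases h2 : 2 ≤ n
      · obtain ⟨hcyc, hall⟩ := Stmt9Aux.count_one h2 hcount
        exact fun j _ => hcyc.sameCycle (hall _) (hall _)
      · intro j _
        have h1 : j = ⟨0, hn⟩ := Fin.ext_iff.mpr (show (j : ℕ) = 0 by have := j.isLt; omega)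
        rw [h1]
    have hfix0 : ∀ j : Fin n, (j : ℕ) < 0 → σ j = j := fun j hj => absurd hj (by omega)
    obtain ⟨f, ⟨-, hle, hstrict, hReq⟩, huniq⟩ :=
      Stmt9Aux.D_lemma (n - 1) 0 hn (by omega) σ hfix0 hcyc0
    have hstrict' : ∀ k : Fin n, (k : ℕ) < n - 1 → k < f k :=
      fun k hk => hstrict k (Nat.zero_le _) hk
    set a₀ : {f : Fin n → Fin n //
        (∀ k, k ≤ f k) ∧ ∀ k : Fin n, (k : ℕ) < n - 1 → k < f k} := ⟨f, hle, hstrict'⟩ with ha₀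
    rw [PMF.map_apply]
    refine Eq.trans (tsum_eq_single a₀ ?_) ?_
    · intro b hb
      have hcnd : ¬ (σ = pivotProd n b.1) := by
        intro hc
        apply hb
        apply Subtype.ext
        exact huniq b.1 ⟨fun k hk => absurd hk (by omega), b.2.1,
          fun k _ hk2 => b.2.2 k hk2, hc.symm⟩
      rw [if_neg hcnd]
    · rw [if_pos (show σ = pivotProd n a₀.1 from hReq.symm),
        PMF.uniformOfFintype_apply, Stmt9Aux.card_strict n hn]
end

section
/- Let Z₁, Z₂, Z₃ be independent standard real Gaussians. Then P(Z₁² + Z₂² > 2 Z₃²) = 1/√3. -/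
open MeasureTheory ProbabilityTheory Real Set

lemma radial_integral (a : ℝ) :
    ∫ r in Set.Ioi a, r * Real.exp (-(1/2) * r ^ 2) = Real.exp (-(1/2) * a ^ 2) := by
  have hderiv : ∀ x ∈ Set.Ici a, HasDerivAt (fun r : ℝ => -Real.exp (-(1/2) * r ^ 2))
      (x * Real.exp (-(1/2) * x ^ 2)) x := by
    intro x _
    have h1 : HasDerivAt (fun r : ℝ => -(1/2) * r ^ 2) (-(1/2) * (2 * x)) x := by
      simpa using ((hasDerivAt_pow 2 x).const_mul (-(1/2) : ℝ))
    have h2 : HasDerivAt (fun r : ℝ => -Real.exp (-(1/2) * r ^ 2)) _ x := (h1.exp).neg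
    convert h2 using 1
    ring
  have hint : IntegrableOn (fun r : ℝ => r * Real.exp (-(1/2) * r ^ 2)) (Set.Ioi a) := by
    have := integrable_mul_exp_neg_mul_sq (b := (1/2 : ℝ)) (by norm_num)
    exact this.integrableOn
  have htend : Filter.Tendsto (fun r : ℝ => -Real.exp (-(1/2) * r ^ 2)) Filter.atTop
      (nhds 0) := by
    have h3 : Filter.Tendsto (fun r : ℝ => (1/2) * r ^ 2) Filter.atTop Filter.atTop :=
      (Filter.tendsto_pow_atTop two_ne_zero).const_mul_atTop (by norm_num)
    have h4 : Filter.Tendsto (fun r : ℝ => -(1/2) * r ^ 2) Filter.atTop Filter.atBot := by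
      rw [show (fun r : ℝ => -(1/2) * r ^ 2) = (fun y : ℝ => -y) ∘ (fun r : ℝ => (1/2) * r ^ 2)
        by funext r; simp [Function.comp, neg_mul]]
      exact Filter.tendsto_neg_atTop_atBot.comp h3
    have h5 := (Real.tendsto_exp_atBot.comp h4).neg
    simpa using h5
  have := integral_Ioi_of_hasDerivAt_of_tendsto' hderiv hint htend
  rw [this]; ring

lemma gaussian_prod_eq :
    (gaussianReal 0 1).prod (gaussianReal 0 1)
      = (volume.prod volume).withDensity
          (fun p => gaussianPDF 0 1 p.1 * gaussianPDF 0 1 p.2) := by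
  refine Measure.prod_eq fun s t hs ht => ?_
  rw [withDensity_apply _ (hs.prod ht), ← Measure.prod_restrict,
    lintegral_prod_mul ((measurable_gaussianPDF 0 1).aemeasurable)
      ((measurable_gaussianPDF 0 1).aemeasurable),
    ← withDensity_apply _ hs, ← withDensity_apply _ ht,
    ← gaussianReal_of_var_ne_zero 0 one_ne_zero]

lemma gauss2 {c : ℝ} (hc : 0 ≤ c) :
    ((gaussianReal 0 1).prod (gaussianReal 0 1)) {p : ℝ × ℝ | c < p.1 ^ 2 + p.2 ^ 2}
      = ENNReal.ofReal (Real.exp (-(1/2) * c)) := by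
  have hS : MeasurableSet {p : ℝ × ℝ | c < p.1 ^ 2 + p.2 ^ 2} :=
    measurableSet_lt measurable_const (by fun_prop)
  set S := {p : ℝ × ℝ | c < p.1 ^ 2 + p.2 ^ 2} with hSdef
  set f2 : ℝ × ℝ → ℝ := fun p => gaussianPDFReal 0 1 p.1 * gaussianPDFReal 0 1 p.2 with hf2
  have h2π : (0:ℝ) ≤ 2 * π := by positivity
  rw [gaussian_prod_eq, withDensity_apply _ hS, ← lintegral_indicator hS]
  have h2 : ∀ p : ℝ × ℝ, S.indicator (fun p => gaussianPDF 0 1 p.1 * gaussianPDF 0 1 p.2) p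
      = ENNReal.ofReal (S.indicator f2 p) := by
    intro p
    rw [Set.indicator_apply, Set.indicator_apply]
    split_ifs with h
    · rw [gaussianPDF, gaussianPDF, ← ENNReal.ofReal_mul (gaussianPDFReal_nonneg _ _ _)]
    · simp
  rw [lintegral_congr h2]
  have hInt : Integrable (S.indicator f2) (volume.prod volume) :=
    ((integrable_gaussianPDFReal 0 1).mul_prod (integrable_gaussianPDFReal 0 1)).indicator hS
  rw [← ofReal_integral_eq_lintegral_ofReal hInt
    (Filter.Eventually.of_forall fun p => Set.indicator_nonneg
      (fun q _ => mul_nonneg (gaussianPDFReal_nonneg _ _ _) (gaussianPDFReal_nonneg _ _ _)) p)]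
  congr 1
  rw [← Measure.volume_eq_prod, ← integral_comp_polarCoord_symm]
  have key : ∀ p ∈ polarCoord.target,
      p.1 • S.indicator f2 (polarCoord.symm p)
        = (Set.Ioi (Real.sqrt c)).indicator
            (fun r => (2*π)⁻¹ * (r * Real.exp (-(1/2) * r^2))) p.1 * (fun _ : ℝ => (1:ℝ)) p.2 := by
    intro p hp
    have hr : 0 < p.1 := hp.1
    have hpt : (polarCoord.symm p).1 ^ 2 + (polarCoord.symm p).2 ^ 2 = p.1 ^ 2 := by
      show (p.1 * cos p.2) ^ 2 + (p.1 * sin p.2) ^ 2 = p.1 ^ 2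
      nlinarith [Real.sin_sq_add_cos_sq p.2]
    have hmem : polarCoord.symm p ∈ S ↔ p.1 ∈ Set.Ioi (Real.sqrt c) := by
      rw [hSdef, Set.mem_setOf_eq, hpt, Set.mem_Ioi]
      exact (Real.sqrt_lt' hr).symm
    have hf2v : f2 (polarCoord.symm p) = (2*π)⁻¹ * Real.exp (-(1/2) * p.1 ^ 2) := by
      show gaussianPDFReal 0 1 (p.1 * cos p.2) * gaussianPDFReal 0 1 (p.1 * sin p.2) = _
      simp only [gaussianPDFReal, NNReal.coe_one, mul_one, sub_zero]
      rw [mul_mul_mul_comm, ← Real.exp_add, ← mul_inv, Real.mul_self_sqrt h2π,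
        show -(p.1 * cos p.2) ^ 2 / 2 + -(p.1 * sin p.2) ^ 2 / 2 = -(1/2) * p.1 ^ 2 by
          nlinarith [Real.sin_sq_add_cos_sq p.2]]
    by_cases h : p.1 ∈ Set.Ioi (Real.sqrt c)
    · rw [Set.indicator_of_mem (hmem.mpr h), Set.indicator_of_mem h, hf2v]
      simp only [smul_eq_mul]; ring
    · rw [Set.indicator_of_notMem (fun hh => h (hmem.mp hh)), Set.indicator_of_notMem h]
      simp
  rw [setIntegral_congr_fun polarCoord.open_target.measurableSet key,
    show polarCoord.target = Set.Ioi (0:ℝ) ×ˢ Set.Ioo (-π) π from rfl,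
    Measure.volume_eq_prod]
  rw [setIntegral_prod_mul ((Set.Ioi (Real.sqrt c)).indicator
      (fun r => (2*π)⁻¹ * (r * Real.exp (-(1/2) * r^2)))) (fun _ : ℝ => (1:ℝ)) _ _]
  have hθ : ∫ _ in Set.Ioo (-π) π, (1:ℝ) = 2 * π := by
    rw [setIntegral_const, smul_eq_mul, mul_one, measureReal_def, Real.volume_Ioo,
      ENNReal.toReal_ofReal (by linarith [Real.pi_pos] : (0:ℝ) ≤ π - -π)]
    ring
  have hrad : ∫ r in Set.Ioi (0:ℝ),
      (Set.Ioi (Real.sqrt c)).indicator (fun r => (2*π)⁻¹ * (r * Real.exp (-(1/2) * r^2))) r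
      = (2*π)⁻¹ * Real.exp (-(1/2) * c) := by
    rw [setIntegral_indicator measurableSet_Ioi, Set.Ioi_inter_Ioi,
      sup_eq_right.mpr (Real.sqrt_nonneg c), integral_const_mul, radial_integral,
      Real.sq_sqrt hc]
  rw [hθ, hrad]
  field_simp

lemma gauss_outer :
    ∫⁻ z, ENNReal.ofReal (Real.exp (-(1/2) * (2 * z ^ 2))) ∂(gaussianReal 0 1)
      = ENNReal.ofReal (1 / Real.sqrt 3) := by
  rw [gaussianReal_of_var_ne_zero 0 one_ne_zero,
    lintegral_withDensity_eq_lintegral_mul _ (measurable_gaussianPDF 0 1) (by fun_prop)]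
  have h1 : ∀ z : ℝ, (gaussianPDF 0 1 * fun z => ENNReal.ofReal (Real.exp (-(1/2) * (2*z^2)))) z
      = ENNReal.ofReal ((Real.sqrt (2*π))⁻¹ * Real.exp (-(3/2) * z ^ 2)) := by
    intro z
    simp only [Pi.mul_apply, gaussianPDF, gaussianPDFReal, NNReal.coe_one, mul_one, sub_zero]
    rw [← ENNReal.ofReal_mul (by positivity), mul_assoc, ← Real.exp_add,
      show -z^2/2 + -(1/2) * (2*z^2) = -(3/2)*z^2 by ring]
  have hInt : Integrable (fun z : ℝ => (Real.sqrt (2*π))⁻¹ * Real.exp (-(3/2) * z ^ 2)) :=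
    (integrable_exp_neg_mul_sq (by norm_num)).const_mul _
  rw [lintegral_congr h1,
    ← ofReal_integral_eq_lintegral_ofReal hInt
      (Filter.Eventually.of_forall fun z => by positivity)]
  congr 1
  rw [integral_const_mul, integral_gaussian,
    show π/(3/2 : ℝ) = (2*π) * (1/3) by ring,
    Real.sqrt_mul (show (0:ℝ) ≤ 2*π by positivity) (1/3), one_div, Real.sqrt_inv,
    inv_mul_cancel_left₀ (show Real.sqrt (2*π) ≠ 0 by positivity), one_div]

/-- For `Z₁, Z₂, Z₃` independent standard real Gaussians,
`P(Z₁² + Z₂² > 2 Z₃²) = 1/√3`. -/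
theorem stmt12 {Ω : Type*} [MeasurableSpace Ω] (μ : Measure Ω) [IsProbabilityMeasure μ]
    (Z : Fin 3 → Ω → ℝ) (hm : ∀ i, Measurable (Z i))
    (hgauss : ∀ i, μ.map (Z i) = gaussianReal 0 1)
    (hindep : iIndepFun Z μ) :
    (μ {ω | (Z 0 ω) ^ 2 + (Z 1 ω) ^ 2 > 2 * (Z 2 ω) ^ 2}).toReal
      = 1 / Real.sqrt 3 := by
  have h01 : IndepFun (Z 0) (Z 1) μ := hindep.indepFun (by decide)
  have hmap01 : μ.map (fun ω => (Z 0 ω, Z 1 ω)) = (gaussianReal 0 1).prod (gaussianReal 0 1) := by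
    exact ((indepFun_iff_map_prod_eq_prod_map_map (hm 0).aemeasurable
      (hm 1).aemeasurable).mp h01).trans (by rw [hgauss 0, hgauss 1])
  have h2 : IndepFun (Z 2) (fun ω => (Z 0 ω, Z 1 ω)) μ :=
    (hindep.indepFun_prodMk hm 0 1 2 (by decide) (by decide)).symm
  have hF : Measurable (fun ω => (Z 2 ω, (Z 0 ω, Z 1 ω))) :=
    (hm 2).prodMk ((hm 0).prodMk (hm 1))
  have hmapT : μ.map (fun ω => (Z 2 ω, (Z 0 ω, Z 1 ω)))
      = (gaussianReal 0 1).prod ((gaussianReal 0 1).prod (gaussianReal 0 1)) := by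
    exact ((indepFun_iff_map_prod_eq_prod_map_map (hm 2).aemeasurable
      ((hm 0).prodMk (hm 1)).aemeasurable).mp h2).trans (by rw [hgauss 2, hmap01])
  have hT : MeasurableSet {p : ℝ × ℝ × ℝ | 2 * p.1 ^ 2 < p.2.1 ^ 2 + p.2.2 ^ 2} :=
    measurableSet_lt (by fun_prop) (by fun_prop)
  have hset : {ω | (Z 0 ω) ^ 2 + (Z 1 ω) ^ 2 > 2 * (Z 2 ω) ^ 2}
      = (fun ω => (Z 2 ω, (Z 0 ω, Z 1 ω))) ⁻¹'
        {p : ℝ × ℝ × ℝ | 2 * p.1 ^ 2 < p.2.1 ^ 2 + p.2.2 ^ 2} := rfl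
  rw [hset, ← Measure.map_apply hF hT, hmapT, Measure.prod_apply hT]
  have hin : ∀ z : ℝ, ((gaussianReal 0 1).prod (gaussianReal 0 1))
      (Prod.mk z ⁻¹' {p : ℝ × ℝ × ℝ | 2 * p.1 ^ 2 < p.2.1 ^ 2 + p.2.2 ^ 2})
      = ENNReal.ofReal (Real.exp (-(1/2) * (2 * z ^ 2))) := by
    intro z
    have hpre : Prod.mk z ⁻¹' {p : ℝ × ℝ × ℝ | 2 * p.1 ^ 2 < p.2.1 ^ 2 + p.2.2 ^ 2}
        = {p : ℝ × ℝ | 2 * z ^ 2 < p.1 ^ 2 + p.2 ^ 2} := rfl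
    rw [hpre]
    exact gauss2 (by positivity)
  rw [lintegral_congr hin, gauss_outer, ENNReal.toReal_ofReal (by positivity)]
end

section
/- Let N = 2ⁿ and let σ ∈ S_N be a uniformly random butterfly permutation (corresponding to ⊗_{j=1}^n Pᵉʲ with the e_j iid Bernoulli(1/2)). Writing σ in the canonical form (N-1, i_{N-1}) ⋯ (1, i_1), the number of indices k with i_k > k equals 0 when σ is the identity and N/2 otherwise; hence this count is distributed as (N/2)·Bernoulli(1 − 1/N). -/
instance instNeZeroTwoPow (n : ℕ) : NeZero (2 ^ n) := ⟨(pow_pos (by norm_num) n).ne'⟩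

namespace Stmt16Aux

def ptake (N : ℕ) (i : Fin N → Fin N) (m : ℕ) : Equiv.Perm (Fin N) :=
  (((List.ofFn fun k : Fin N => Equiv.swap k (i k)).take m).reverse).prod

lemma ptake_zero (N : ℕ) (i : Fin N → Fin N) : ptake N i 0 = 1 := by simp [ptake]

lemma ptake_succ (N : ℕ) (i : Fin N → Fin N) (m : ℕ) (hm : m < N) :
    ptake N i (m + 1) = Equiv.swap ⟨m, hm⟩ (i ⟨m, hm⟩) * ptake N i m := by
  unfold ptake
  rw [List.take_succ]
  have hlen : m < (List.ofFn fun k : Fin N => Equiv.swap k (i k)).length := by simp [hm]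
  rw [List.getElem?_eq_getElem hlen]
  simp [List.reverse_append, List.getElem_ofFn]

lemma pivotProd_eq_ptake (N : ℕ) (i : Fin N → Fin N) : pivotProd N i = ptake N i N := by
  unfold pivotProd ptake
  rw [List.take_of_length_le (by simp)]

lemma prod_apply_fixed {α : Type*} (l : List (Equiv.Perm α)) (x : α)
    (h : ∀ g ∈ l, g x = x) : l.prod x = x := by
  induction l with
  | nil => rfl
  | cons g t ih =>
      rw [List.prod_cons, Equiv.Perm.mul_apply,
        ih (fun g hg => h g (List.mem_cons_of_mem _ hg)), h g List.mem_cons_self]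

lemma pivot_formula (N : ℕ) (i : Fin N → Fin N) (h : ∀ k : Fin N, (k : ℕ) ≤ (i k : ℕ))
    (k : Fin N) : i k = ptake N i (k : ℕ) ((pivotProd N i)⁻¹ k) := by
  set l := List.ofFn fun m : Fin N => Equiv.swap m (i m) with hl
  have hsplit : pivotProd N i = ((l.drop ((k:ℕ)+1)).reverse).prod * ptake N i ((k:ℕ)+1) := by
    unfold pivotProd ptake
    rw [← hl]
    conv_lhs => rw [← List.take_append_drop ((k:ℕ)+1) l]
    rw [List.reverse_append, List.prod_append]
  have hfix : ∀ g ∈ (l.drop ((k:ℕ)+1)).reverse, g k = k := by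
    intro g hg
    rw [List.mem_reverse] at hg
    obtain ⟨idx, hidx, hg⟩ := List.mem_iff_getElem.1 hg
    rw [List.getElem_drop] at hg
    have hlt : (k:ℕ)+1+idx < N := by
      have h2 := hidx
      simp only [List.length_drop, hl, List.length_ofFn] at h2
      omega
    simp only [hl, List.getElem_ofFn] at hg
    rw [← hg]
    apply Equiv.swap_apply_of_ne_of_ne
    · intro hcon
      have := congrArg Fin.val hcon
      simp at this
      omega
    · intro hcon
      have := congrArg Fin.val hcon
      have hge := h ⟨(k:ℕ)+1+idx, hlt⟩
      simp at this hge
      omega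
  have h1 : pivotProd N i ((ptake N i (k:ℕ))⁻¹ (i k)) = k := by
    rw [hsplit, ptake_succ N i (k:ℕ) k.isLt]
    simp only [Fin.eta]
    rw [Equiv.Perm.mul_apply, Equiv.Perm.mul_apply, Equiv.Perm.coe_inv, Equiv.apply_symm_apply,
      Equiv.swap_apply_right]
    exact prod_apply_fixed _ _ hfix
  have h2 : (ptake N i (k:ℕ))⁻¹ (i k) = (pivotProd N i)⁻¹ k := by
    conv_rhs => rw [← h1]
    simp only [Equiv.Perm.coe_inv, Equiv.symm_apply_apply]
  rw [← h2, Equiv.Perm.coe_inv, Equiv.apply_symm_apply]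

lemma pivot_unique (N : ℕ) (i j : Fin N → Fin N) (hik : ∀ k : Fin N, (k:ℕ) ≤ (i k : ℕ))
    (hjk : ∀ k : Fin N, (k:ℕ) ≤ (j k : ℕ)) (hp : pivotProd N i = pivotProd N j) : i = j := by
  have key : ∀ m : ℕ, ∀ k : Fin N, (k : ℕ) < m → i k = j k := by
    intro m
    induction m with
    | zero => intro k hk; omega
    | succ m IH =>
      intro k hk
      rcases Nat.lt_or_ge (k:ℕ) m with h | h
      · exact IH k h
      · have hkm : (k:ℕ) = m := by omega
        have htake : (List.ofFn fun t : Fin N => Equiv.swap t (i t)).take (k:ℕ)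
            = (List.ofFn fun t : Fin N => Equiv.swap t (j t)).take (k:ℕ) := by
          apply List.ext_getElem
          · simp
          · intro idx h1 h2
            rw [List.getElem_take, List.getElem_take, List.getElem_ofFn, List.getElem_ofFn]
            have hidxk : idx < (k:ℕ) := by
              simp only [List.length_take, List.length_ofFn] at h1
              omega
            have hIJ := IH ⟨idx, by omega⟩ (by simpa using by omega)
            rw [hIJ]
        rw [pivot_formula N i hik k, pivot_formula N j hjk k, hp]
        unfold ptake
        rw [htake]
  funext k
  exact key ((k:ℕ)+1) k (Nat.lt_succ_self _)


def jfun (n : ℕ) (e : Fin (2^n)) : Fin (2^n) → Fin (2^n) := fun k =>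
  if (k:ℕ) < (k:ℕ) ^^^ (e:ℕ) then
    ⟨(k:ℕ) ^^^ (e:ℕ), Nat.xor_lt_two_pow k.isLt e.isLt⟩ else k

lemma jfun_le (n : ℕ) (e : Fin (2^n)) : ∀ k : Fin (2^n), (k:ℕ) ≤ (jfun n e k : ℕ) := by
  intro k
  unfold jfun
  split
  · next h => exact le_of_lt h
  · exact le_refl _

lemma ptake_jfun (n : ℕ) (e : Fin (2^n)) (m : ℕ) (hm : m ≤ 2^n) (x : Fin (2^n)) :
    ((ptake (2^n) (jfun n e) m) x : ℕ)
      = if min (x:ℕ) ((x:ℕ) ^^^ (e:ℕ)) < m then (x:ℕ) ^^^ (e:ℕ) else (x:ℕ) := by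
  induction m with
  | zero => simp [ptake_zero]
  | succ m IH =>
    have hmN : m < 2^n := hm
    rw [ptake_succ _ _ m hmN, Equiv.Perm.mul_apply]
    have hy := IH (le_of_lt hmN)
    set y := (ptake (2^n) (jfun n e) m) x with hydef
    have hxe : ((x:ℕ) ^^^ (e:ℕ)) ^^^ (e:ℕ) = (x:ℕ) := Nat.xor_xor_cancel_right _ _
    have hme : ((m:ℕ) ^^^ (e:ℕ)) ^^^ (e:ℕ) = m := Nat.xor_xor_cancel_right _ _
    -- notation
    by_cases hA : (m:ℕ) < m ^^^ (e:ℕ)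
    · have hj : jfun n e ⟨m, hmN⟩ = ⟨m ^^^ (e:ℕ), Nat.xor_lt_two_pow hmN e.isLt⟩ := by
        unfold jfun; simp [hA]
      rw [hj]
      rcases eq_or_ne y ⟨m, hmN⟩ with h1 | h1
      · rw [h1, Equiv.swap_apply_left]
        have hyv : (y:ℕ) = m := by rw [h1]
        by_cases hmin : min (x:ℕ) ((x:ℕ) ^^^ (e:ℕ)) < m
        · rw [if_pos hmin] at hy
          -- y = X = m  →  x = m^^^e > m, min = m, contradiction
          have hxv : (x:ℕ) = (m:ℕ) ^^^ (e:ℕ) := by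
            rw [← hxe, hy.symm.trans hyv]
          omega
        · rw [if_neg hmin] at hy
          have hxm : (x:ℕ) = m := hy.symm.trans hyv
          have hX : (x:ℕ) ^^^ (e:ℕ) = (m:ℕ) ^^^ (e:ℕ) := by rw [hxm]
          rw [if_pos (by omega)]
          simp [hX]
      · rcases eq_or_ne y ⟨(m:ℕ) ^^^ (e:ℕ), Nat.xor_lt_two_pow hmN e.isLt⟩ with h2 | h2
        · rw [h2, Equiv.swap_apply_right]
          have hyv : (y:ℕ) = (m:ℕ) ^^^ (e:ℕ) := by rw [h2]
          by_cases hmin : min (x:ℕ) ((x:ℕ) ^^^ (e:ℕ)) < m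
          · rw [if_pos hmin] at hy
            have hxm : (x:ℕ) = m := by
              have : (x:ℕ) ^^^ (e:ℕ) = (m:ℕ) ^^^ (e:ℕ) := hy.symm.trans hyv
              have := congrArg (· ^^^ (e:ℕ)) this
              simpa [hxe, hme] using this
            omega
          · rw [if_neg hmin] at hy
            have hxv : (x:ℕ) = (m:ℕ) ^^^ (e:ℕ) := hy.symm.trans hyv
            have hX : (x:ℕ) ^^^ (e:ℕ) = m := by rw [hxv, hme]
            rw [if_pos (by omega), hX]
        · rw [Equiv.swap_apply_of_ne_of_ne h1 h2]
          have hy1 : (y:ℕ) ≠ m := fun hc => h1 (Fin.ext hc)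
          have hy2 : (y:ℕ) ≠ (m:ℕ) ^^^ (e:ℕ) := fun hc => h2 (Fin.ext hc)
          by_cases hmin : min (x:ℕ) ((x:ℕ) ^^^ (e:ℕ)) < m
          · rw [if_pos hmin] at hy
            rw [if_pos (by omega)]
            exact hy
          · rw [if_neg hmin] at hy
            -- y = x, x ∉ {m, m^^^e}; show min ≠ m
            have hxm : (x:ℕ) ≠ m := by rw [← hy]; exact hy1
            have hxme : (x:ℕ) ≠ (m:ℕ) ^^^ (e:ℕ) := by rw [← hy]; exact hy2
            have hXm : (x:ℕ) ^^^ (e:ℕ) ≠ m := by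
              intro hc
              apply hxme
              rw [← hxe, hc]
            rw [if_neg (by omega)]
            exact hy
    · -- m ^^^ e ≤ m : jfun m = m, swap is identity
      have hj : jfun n e ⟨m, hmN⟩ = ⟨m, hmN⟩ := by
        unfold jfun; simp [hA]
      rw [hj, Equiv.swap_self, Equiv.refl_apply]
      by_cases hmin : min (x:ℕ) ((x:ℕ) ^^^ (e:ℕ)) < m
      · rw [if_pos hmin] at hy
        rw [if_pos (by omega)]
        exact hy
      · rw [if_neg hmin] at hy
        by_cases hmin2 : min (x:ℕ) ((x:ℕ) ^^^ (e:ℕ)) < m + 1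
        · -- min = m; show x^^^e = x
          have hXx : (x:ℕ) ^^^ (e:ℕ) = (x:ℕ) := by
            rcases Nat.lt_or_ge (x:ℕ) ((x:ℕ) ^^^ (e:ℕ)) with hc | hc
            · -- x = m ≤ X, and m^^^e ≤ m so X = m^^^e ≤ m = x, contra with hc unless eq
              have hxm : (x:ℕ) = m := by omega
              have : (x:ℕ) ^^^ (e:ℕ) = (m:ℕ) ^^^ (e:ℕ) := by rw [hxm]
              omega
            · -- X = m ≤ x; x = X^^^e = m^^^e ≤ m = X ≤ x so x = m
              have hXm : (x:ℕ) ^^^ (e:ℕ) = m := by omega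
              have hxv : (x:ℕ) = (m:ℕ) ^^^ (e:ℕ) := by rw [← hxe, hXm]
              omega
          rw [if_pos hmin2, hXx]
          exact hy
        · rw [if_neg hmin2]
          exact hy


lemma pivot_jfun (n : ℕ) (e : Fin (2^n)) (σ : Equiv.Perm (Fin (2^n)))
    (hσ : ∀ x : Fin (2^n), ((σ x : Fin (2^n)) : ℕ) = (x:ℕ) ^^^ (e:ℕ)) :
    pivotProd (2^n) (jfun n e) = σ := by
  apply Equiv.ext
  intro x
  apply Fin.ext
  rw [pivotProd_eq_ptake, hσ, ptake_jfun n e (2^n) le_rfl x, if_pos]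
  exact lt_of_le_of_lt (min_le_left _ _) x.isLt

lemma card_filter_xor (n : ℕ) (e : Fin (2^n)) (he : (e:ℕ) ≠ 0) :
    (Finset.univ.filter fun k : Fin (2^n) => (k:ℕ) < (k:ℕ) ^^^ (e:ℕ)).card = 2^n / 2 := by
  classical
  have hxor_ne : ∀ a : Fin (2^n), (a:ℕ) ^^^ (e:ℕ) ≠ (a:ℕ) := by
    intro a hc
    apply he
    have h2 := congrArg (fun t => (a:ℕ) ^^^ t) hc
    simpa [Nat.xor_xor_cancel_left, Nat.xor_self] using h2
  set p : Fin (2^n) → Prop := fun k => (k:ℕ) < (k:ℕ) ^^^ (e:ℕ) with hp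
  have hcard : (Finset.univ.filter p).card = (Finset.univ.filter fun a => ¬ p a).card := by
    apply Finset.card_bij'
      (i := fun (a : Fin (2^n)) (_ : a ∈ Finset.univ.filter p) => (⟨(a:ℕ) ^^^ (e:ℕ), Nat.xor_lt_two_pow a.isLt e.isLt⟩ : Fin (2^n)))
      (j := fun (a : Fin (2^n)) (_ : a ∈ Finset.univ.filter fun a => ¬ p a) => (⟨(a:ℕ) ^^^ (e:ℕ), Nat.xor_lt_two_pow a.isLt e.isLt⟩ : Fin (2^n)))
    · intro a ha
      rw [Finset.mem_filter] at ha ⊢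
      refine ⟨Finset.mem_univ _, ?_⟩
      simp only [hp, Nat.xor_xor_cancel_right]
      omega
    · intro a ha
      rw [Finset.mem_filter] at ha ⊢
      refine ⟨Finset.mem_univ _, ?_⟩
      have h1 : ¬ ((a:ℕ) < (a:ℕ) ^^^ (e:ℕ)) := ha.2
      have h2 := hxor_ne a
      simp only [hp, Nat.xor_xor_cancel_right]
      omega
    · intro a _; apply Fin.ext; simp [Nat.xor_xor_cancel_right]
    · intro a _; apply Fin.ext; simp [Nat.xor_xor_cancel_right]
  have htot := Finset.card_filter_add_card_filter_not (s := Finset.univ) p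
  rw [Finset.card_univ, Fintype.card_fin] at htot
  show (Finset.univ.filter p).card = 2^n/2
  omega

end Stmt16Aux

/-- Let `σ e` be the butterfly permutation of `{0, …, 2^n - 1}` given by bitwise
XOR with `e` (the permutation whose matrix is `⊗_j P^{e_j}`), and write each `σ e`
in the canonical form `(N-1, i_{N-1}) ⋯ (1, i_1)` with `k ≤ i_k`. Then the number
of indices `k` with `i_k > k` is `0` when `σ e = 1` and `N/2` otherwise; hence for
`e` uniform (i.e. the `e_j` iid Bernoulli(1/2)), this count is distributed as
`(N/2)·Bernoulli(1 - 1/N)`. -/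

theorem stmt16 (n : ℕ) (σ : Fin (2 ^ n) → Equiv.Perm (Fin (2 ^ n)))
    (hσ : ∀ e x : Fin (2 ^ n), ((σ e) x : ℕ) = (x : ℕ) ^^^ (e : ℕ))
    (i : Fin (2 ^ n) → Fin (2 ^ n) → Fin (2 ^ n))
    (hi : ∀ e, (∀ k, k ≤ i e k) ∧ pivotProd (2 ^ n) (i e) = σ e) :
    (∀ e, (Finset.univ.filter fun k => k < i e k).card
        = if σ e = 1 then 0 else 2 ^ n / 2) ∧
    (PMF.uniformOfFintype (Fin (2 ^ n))).map
        (fun e => (Finset.univ.filter fun k => k < i e k).card)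
      = (PMF.bernoulli (1 - ((2 : NNReal) ^ n)⁻¹) tsub_le_self).map
          (fun b => if b then 2 ^ n / 2 else 0) := by
  classical
  have hie : ∀ e : Fin (2^n), i e = Stmt16Aux.jfun n e := by
    intro e
    apply Stmt16Aux.pivot_unique (2^n)
    · exact fun k => (hi e).1 k
    · exact Stmt16Aux.jfun_le n e
    · rw [(hi e).2, Stmt16Aux.pivot_jfun n e (σ e) (hσ e)]
  have hσ0 : ∀ e : Fin (2^n), σ e = 1 ↔ e = 0 := by
    intro e
    constructor
    · intro h
      have h2 := hσ e 0
      rw [h] at h2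
      simp only [Equiv.Perm.one_apply, Fin.val_zero, Nat.zero_xor] at h2
      exact Fin.ext (by rw [← h2, Fin.val_zero])
    · intro h
      subst h
      apply Equiv.ext; intro x; apply Fin.ext
      rw [hσ]
      simp
  have hcount : ∀ e : Fin (2^n), (Finset.univ.filter fun k => k < i e k).card
      = if σ e = 1 then 0 else 2^n/2 := by
    intro e
    have hfilter : (Finset.univ.filter fun k => k < i e k)
        = Finset.univ.filter fun k : Fin (2^n) => (k:ℕ) < (k:ℕ) ^^^ (e:ℕ) := by
      rw [hie e]
      apply Finset.filter_congr
      intro k _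
      unfold Stmt16Aux.jfun
      rw [Fin.lt_def]
      split
      · next h => simp
      · next h => exact iff_of_false (lt_irrefl _) h
    rw [hfilter]
    by_cases he : e = 0
    · subst he
      rw [if_pos ((hσ0 0).2 rfl)]
      rw [Finset.card_eq_zero, Finset.filter_eq_empty_iff]
      intro k _
      simp
    · have hev : (e:ℕ) ≠ 0 := by
        intro hc; exact he (Fin.ext (by simp [hc]))
      rw [if_neg (fun h => he ((hσ0 e).1 h))]
      exact Stmt16Aux.card_filter_xor n e hev
  refine ⟨hcount, ?_⟩
  have hfeq : (fun e : Fin (2^n) => (Finset.univ.filter fun k => k < i e k).card)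
      = (fun b : Bool => if b then 2^n/2 else 0) ∘ (fun e : Fin (2^n) => decide (e ≠ 0)) := by
    funext e
    simp only [Function.comp_apply]
    rw [hcount e]
    by_cases he : e = 0
    · simp [he, (hσ0 0).2 rfl]
    · have hne : σ e ≠ 1 := fun h => he ((hσ0 e).1 h)
      simp [he, hne]
  rw [hfeq, ← PMF.map_comp]
  congr 1
  apply PMF.ext
  intro b
  rw [PMF.map_apply, PMF.bernoulli_apply, tsum_fintype]
  simp only [PMF.uniformOfFintype_apply, Fintype.card_fin]
  have hcast : ((2^n : ℕ) : ENNReal) = 2^n := by push_cast; ring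
  have h0 : ((2^n : ℕ) : ENNReal) ≠ 0 := by
    rw [Nat.cast_ne_zero]
    positivity
  cases b with
  | false =>
    have hsum : ∀ e : Fin (2^n),
        (if false = decide (¬ e = 0) then ((2^n:ℕ):ENNReal)⁻¹ else 0)
          = if e = 0 then ((2^n:ℕ):ENNReal)⁻¹ else 0 := by
      intro e; by_cases he : e = 0 <;> simp [he]
    rw [Finset.sum_congr rfl (fun e _ => hsum e), Finset.sum_ite_eq']
    rw [if_pos (Finset.mem_univ _), hcast]
    rw [Bool.cond_false, tsub_tsub_cancel_of_le (inv_le_one_of_one_le₀ (one_le_pow₀ one_le_two)),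
      ENNReal.coe_inv (by positivity), ENNReal.coe_pow]
    rfl
  | true =>
    have hsum : ∀ e : Fin (2^n),
        (if true = decide (¬ e = 0) then ((2^n:ℕ):ENNReal)⁻¹ else 0)
          = if ¬ e = 0 then ((2^n:ℕ):ENNReal)⁻¹ else 0 := by
      intro e; by_cases he : e = 0 <;> simp [he]
    rw [Finset.sum_congr rfl (fun e _ => hsum e), Finset.sum_ite, Finset.sum_const,
      Finset.sum_const_zero, add_zero, Finset.filter_ne',
      Finset.card_erase_of_mem (Finset.mem_univ _), Finset.card_univ, Fintype.card_fin,
      nsmul_eq_mul, ENNReal.natCast_sub, Nat.cast_one,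
      ENNReal.sub_mul (fun _ _ => ENNReal.inv_ne_top.2 h0),
      ENNReal.mul_inv_cancel h0 (ENNReal.natCast_ne_top _), one_mul, hcast,
      Bool.cond_true, ENNReal.coe_sub, ENNReal.coe_one, ENNReal.coe_inv (by positivity),
      ENNReal.coe_pow]
    rfl
end
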